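/- Let R be a finite set of positive integers with r = max(R), and let s ≥ 2 be an integer. Every R-step matrix over ℤ_s can be expressed as a product of exactly r R-atomic matrices over ℤ_s. -/

import Mathlib

/-- An `R`-atomic matrix over `ℤ_s`: an `r × r` matrix with entry `1` in positions
`(i, i+1)` for `1 ≤ i ≤ r-1` (1-indexed), zeros elsewhere in the first `r-1` rows, and
last row `(α_r, α_{r-1}, …, α_1)` where `α_j = 0` for every `j ∉ R`. -/
def IsAtomicMat (R : Finset ℕ) (r s : ℕ) (A : Matrix (Fin r) (Fin r) (ZMod s)) : Prop :=
  ∀ i j : Fin r,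
    ((i : ℕ) + 1 < r → A i j = if (j : ℕ) = (i : ℕ) + 1 then (1 : ZMod s) else 0) ∧
    ((i : ℕ) + 1 = r → r - (j : ℕ) ∉ R → A i j = 0)

/-- An `R`-step matrix over `ℤ_s`: obtained from `I_r` by replacing, for some row `t`,
the `t`-th row by a row `(β_1, …, β_r)` in which `β_i` is allowed to be nonzero only if
there exists `j ∈ R` with `i + j ≡ t (mod r)` (all 1-indexed). -/
def IsStepMat (R : Finset ℕ) (r s : ℕ) (B : Matrix (Fin r) (Fin r) (ZMod s)) : Prop :=
  ∃ t : Fin r,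
    (∀ i j : Fin r, i ≠ t → B i j = if i = j then (1 : ZMod s) else 0) ∧
    ∀ j : Fin r, (¬ ∃ d ∈ R, ((j : ℕ) + 1 + d) % r = ((t : ℕ) + 1) % r) → B t j = 0

open Fin.CommRing

section
variable {r s : ℕ} [NeZero r]

def cycP (r s : ℕ) [NeZero r] : Matrix (Fin r) (Fin r) (ZMod s) :=
  Matrix.of fun i j => if j = i + 1 then 1 else 0

lemma cycP_mul (X : Matrix (Fin r) (Fin r) (ZMod s)) (i j : Fin r) :
    (cycP r s * X) i j = X (i + 1) j := by
  simp only [Matrix.mul_apply, cycP, Matrix.of_apply]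
  rw [Finset.sum_eq_single (i + 1)]
  · simp
  · intro k _ hk; simp [hk]
  · simp

lemma mul_cycP (X : Matrix (Fin r) (Fin r) (ZMod s)) (i j : Fin r) :
    (X * cycP r s) i j = X i (j - 1) := by
  simp only [Matrix.mul_apply, cycP, Matrix.of_apply]
  rw [Finset.sum_eq_single (j - 1)]
  · simp
  · intro k _ hk
    rw [if_neg, mul_zero]
    intro h; exact hk (by rw [h]; ring)
  · simp

lemma pow_cycP_mul (a : ℕ) : ∀ (X : Matrix (Fin r) (Fin r) (ZMod s)) (i j : Fin r),
    (cycP r s ^ a * X) i j = X (i + (a : Fin r)) j := by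
  induction a with
  | zero => intro X i j; simp
  | succ n ih =>
    intro X i j
    rw [pow_succ', mul_assoc, cycP_mul, ih]
    congr 1
    push_cast
    ring

lemma mul_pow_cycP (b : ℕ) : ∀ (X : Matrix (Fin r) (Fin r) (ZMod s)) (i j : Fin r),
    (X * cycP r s ^ b) i j = X i (j - (b : Fin r)) := by
  induction b with
  | zero => intro X i j; simp
  | succ n ih =>
    intro X i j
    rw [pow_succ, ← mul_assoc, mul_cycP, ih]
    congr 1
    push_cast
    ring

lemma fin_val_add_one (i : Fin r) : ((i + 1 : Fin r) : ℕ) = ((i : ℕ) + 1) % r := by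
  simp only [Fin.add_def, Fin.val_one', Nat.add_mod_mod]

lemma fin_add_one_eq_iff {i j : Fin r} (h : (i : ℕ) + 1 < r) :
    j = i + 1 ↔ (j : ℕ) = (i : ℕ) + 1 := by
  rw [Fin.ext_iff, fin_val_add_one, Nat.mod_eq_of_lt h]

lemma fin_add_one_last {i : Fin r} (h : (i : ℕ) + 1 = r) : i + 1 = 0 := by
  rw [Fin.ext_iff, fin_val_add_one, h, Nat.mod_self, Fin.val_zero]

lemma cycP_atomic (R : Finset ℕ) (hrR : r ∈ R) : IsAtomicMat R r s (cycP r s) := by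
  intro i j
  constructor
  · intro h
    simp only [cycP, Matrix.of_apply]
    by_cases hj : (j : ℕ) = (i : ℕ) + 1
    · rw [if_pos hj, if_pos ((fin_add_one_eq_iff h).mpr hj)]
    · rw [if_neg hj, if_neg (fun hc => hj ((fin_add_one_eq_iff h).mp hc))]
  · intro h hR
    simp only [cycP, Matrix.of_apply, fin_add_one_last h]
    rw [if_neg]
    intro hj
    apply hR
    rw [hj]
    simpa using hrR

end

/-- Every `R`-step matrix over `ℤ_s` is a product of exactly `r` `R`-atomic matrices. -/
theorem step_eq_prod_atomic (R : Finset ℕ) (r s : ℕ)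
    (hrR : r ∈ R) (hmax : ∀ j ∈ R, j ≤ r) (hpos : ∀ j ∈ R, 0 < j) (hs : 2 ≤ s)
    (B : Matrix (Fin r) (Fin r) (ZMod s)) (hB : IsStepMat R r s B) :
    ∃ L : List (Matrix (Fin r) (Fin r) (ZMod s)),
      L.length = r ∧ (∀ A ∈ L, IsAtomicMat R r s A) ∧ L.prod = B := by
  obtain ⟨t, ht1, ht2⟩ := hB
  haveI : NeZero r := ⟨t.pos.ne'⟩
  set P : Matrix (Fin r) (Fin r) (ZMod s) := cycP r s with hP
  set M : Matrix (Fin r) (Fin r) (ZMod s) :=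
    Matrix.of (fun i j => if i = 0 then B t (j + t) else if i = j then 1 else 0) with hM
  have hPM : IsAtomicMat R r s (P * M) := by
    intro i j
    constructor
    · intro h
      rw [hP, cycP_mul]
      have hne : i + 1 ≠ 0 := by
        intro hc
        have h1 := fin_val_add_one i
        rw [hc, Nat.mod_eq_of_lt h, Fin.val_zero] at h1
        omega
      rw [hM]
      simp only [Matrix.of_apply, if_neg hne]
      by_cases hj : (j : ℕ) = (i : ℕ) + 1
      · rw [if_pos hj, if_pos ((fin_add_one_eq_iff h).mpr hj).symm]
      · rw [if_neg hj, if_neg (fun hc => hj ((fin_add_one_eq_iff h).mp hc.symm))]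
    · intro h hR
      rw [hP, cycP_mul, fin_add_one_last h, hM]
      simp only [Matrix.of_apply, if_pos rfl]
      apply ht2
      rintro ⟨d, hd, hmod⟩
      have hjt : ((j + t : Fin r) : ℕ) = ((j : ℕ) + (t : ℕ)) % r := by
        rw [Fin.add_def]
      rw [hjt] at hmod
      have h1 : ((j : ℕ) + (t : ℕ)) % r + 1 + d ≡ (j : ℕ) + (t : ℕ) + 1 + d [MOD r] :=
        Nat.ModEq.add_right _ (Nat.ModEq.add_right _ (Nat.mod_modEq _ _))
      have h2 : (j : ℕ) + (t : ℕ) + 1 + d ≡ (t : ℕ) + 1 [MOD r] := h1.symm.trans hmod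
      have h3 : (j : ℕ) + d + ((t : ℕ) + 1) ≡ 0 + ((t : ℕ) + 1) [MOD r] := by
        have he : (j : ℕ) + d + ((t : ℕ) + 1) = (j : ℕ) + (t : ℕ) + 1 + d := by ring
        rw [he, Nat.zero_add]
        exact h2
      have h4 : r ∣ (j : ℕ) + d := Nat.modEq_zero_iff_dvd.mp (h3.add_right_cancel' _)
      obtain ⟨k, hk⟩ := h4
      have hd1 : 0 < d := hpos d hd
      have hd2 : d ≤ r := hmax d hd
      have hjr : (j : ℕ) < r := j.isLt
      have hdr : d = r - (j : ℕ) := by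
        rcases Nat.lt_or_ge k 2 with hk2 | hk2
        · interval_cases k <;> omega
        · nlinarith
      exact hR (hdr ▸ hd)
  refine ⟨List.replicate (r - 1 - (t : ℕ)) P ++ (P * M) :: List.replicate (t : ℕ) P,
    ?_, ?_, ?_⟩
  · simp only [List.length_append, List.length_replicate, List.length_cons]
    have := t.isLt
    omega
  · intro A hA
    simp only [List.mem_append, List.mem_replicate, List.mem_cons] at hA
    rcases hA with ⟨-, rfl⟩ | rfl | ⟨-, rfl⟩
    · exact cycP_atomic R hrR
    · exact hPM
    · exact cycP_atomic R hrR
  · rw [List.prod_append, List.prod_cons, List.prod_replicate, List.prod_replicate]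
    have hkey : ((r - 1 - (t : ℕ) : ℕ) : Fin r) + 1 = -t := by
      have ht' := t.isLt
      have h1 : ((r - 1 - (t : ℕ) : ℕ) : Fin r) + 1 = ((r - (t : ℕ) : ℕ) : Fin r) := by
        rw [show (r - (t : ℕ)) = (r - 1 - (t : ℕ)) + 1 from by omega]
        push_cast
        ring
      have h2 : ((r - (t : ℕ) : ℕ) : Fin r) + t = 0 :=
        calc ((r - (t : ℕ) : ℕ) : Fin r) + t
            = ((r - (t : ℕ) : ℕ) : Fin r) + (((t : ℕ) : ℕ) : Fin r) := by
              rw [Fin.cast_val_eq_self]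
          _ = ((r - (t : ℕ) + (t : ℕ) : ℕ) : Fin r) := (Nat.cast_add _ _).symm
          _ = ((r : ℕ) : Fin r) := by rw [show r - (t : ℕ) + (t : ℕ) = r from by omega]
          _ = 0 := Fin.natCast_self r
      rw [h1]
      exact eq_neg_of_add_eq_zero_left h2
    ext i j
    rw [← mul_assoc, mul_assoc, pow_cycP_mul, mul_pow_cycP, hP, cycP_mul,
      add_assoc, hkey, hM]
    simp only [Matrix.of_apply, Fin.cast_val_eq_self, ← sub_eq_add_neg]
    by_cases hit : i = t
    · rw [hit, if_pos (sub_self t), sub_add_cancel]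
    · rw [if_neg (fun hc => hit (by rwa [sub_eq_zero] at hc)), ht1 i j hit]
      simp only [sub_left_inj]
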